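/- Monotonicity of p-energy under the quasi-order: let λ₁,…,λ_n and μ₁,…,μ_n be nonnegative reals such that for all real z ≥ 0, ∏_j (z² + λ_j²) ≤ ∏_j (z² + μ_j²). Then for every p with 0 < p < 2, ∑_j λ_j^p ≤ ∑_j μ_j^p. -/

import Mathlib

open MeasureTheory Set
open scoped NNReal

noncomputable def Cint (s : ℝ) : ℝ := ∫ u in Ioi (0:ℝ), Real.log (1 + 1/u) * u ^ (s - 1)

lemma log_one_add_le_rpow {x α : ℝ} (hx : 0 ≤ x) (hα : 0 < α) (hα1 : α ≤ 1) :
    Real.log (1 + x) ≤ x ^ α / α := by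
  have h1 : (0:ℝ) < 1 + x := by linarith
  have h2 : α * Real.log (1 + x) = Real.log ((1 + x) ^ α) := (Real.log_rpow h1 α).symm
  have h3 : Real.log ((1 + x) ^ α) ≤ (1 + x) ^ α - 1 :=
    Real.log_le_sub_one_of_pos (Real.rpow_pos_of_pos h1 α)
  have h4 : (1 + x) ^ α ≤ 1 + x ^ α := by
    have := NNReal.rpow_add_le_add_rpow 1 x.toNNReal hα.le hα1
    have h5 : ((1 + x.toNNReal : ℝ≥0) : ℝ) = 1 + x := by
      push_cast [Real.coe_toNNReal x hx]; ring
    calc (1 + x) ^ α = (((1 + x.toNNReal : ℝ≥0) : ℝ)) ^ α := by rw [h5]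
      _ = (((1 + x.toNNReal) ^ α : ℝ≥0) : ℝ) := by
          rw [← NNReal.coe_rpow]
      _ ≤ (((1:ℝ≥0) ^ α + x.toNNReal ^ α : ℝ≥0) : ℝ) := by exact_mod_cast this
      _ = 1 + x ^ α := by
          push_cast
          rw [Real.coe_toNNReal x hx, Real.one_rpow]
  rw [le_div_iff₀ hα, mul_comm]
  calc α * Real.log (1 + x) = Real.log ((1 + x) ^ α) := h2
    _ ≤ (1 + x) ^ α - 1 := h3
    _ ≤ x ^ α := by linarith

lemma f_nonneg {a s : ℝ} (ha : 0 ≤ a) {t : ℝ} (ht : 0 < t) :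
    0 ≤ Real.log (1 + a / t) * t ^ (s - 1) :=
  mul_nonneg (Real.log_nonneg (by nlinarith [div_nonneg ha ht.le]))
    (Real.rpow_nonneg ht.le _)

lemma integrable_f {a s : ℝ} (ha : 0 ≤ a) (hs0 : 0 < s) (hs1 : s < 1) :
    IntegrableOn (fun t => Real.log (1 + a / t) * t ^ (s - 1)) (Ioi (0:ℝ)) := by
  have hmeas : Measurable (fun t : ℝ => Real.log (1 + a / t) * t ^ (s - 1)) := by
    exact ((measurable_const.add (measurable_const.div measurable_id)).log).mul
      (measurable_id.pow_const _)
  set α : ℝ := s / 2 with hαdef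
  have hα0 : 0 < α := by positivity
  have hα1 : α ≤ 1 := by simp only [hαdef]; linarith
  have hαs : α < s := by simp only [hαdef]; linarith
  rw [← Ioc_union_Ioi_eq_Ioi (zero_le_one : (0:ℝ) ≤ 1)]
  apply IntegrableOn.union
  · -- on Ioc 0 1, dominate by (a^α/α) * t^(s-1-α)
    have hg : IntegrableOn (fun t : ℝ => a ^ α / α * t ^ (s - 1 - α)) (Ioc (0:ℝ) 1) := by
      have := (intervalIntegral.intervalIntegrable_rpow' (a := 0) (b := 1)
        (r := s - 1 - α) (by linarith))
      rw [intervalIntegrable_iff_integrableOn_Ioc_of_le zero_le_one] at this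
      exact this.const_mul _
    refine Integrable.mono' hg (hmeas.aestronglyMeasurable.restrict) ?_
    filter_upwards [ae_restrict_mem measurableSet_Ioc] with t ht
    obtain ⟨ht0, ht1⟩ := ht
    rw [Real.norm_eq_abs, abs_of_nonneg (f_nonneg ha ht0)]
    have h1 : Real.log (1 + a / t) ≤ (a / t) ^ α / α :=
      log_one_add_le_rpow (div_nonneg ha ht0.le) hα0 hα1
    calc Real.log (1 + a / t) * t ^ (s - 1) ≤ (a / t) ^ α / α * t ^ (s - 1) :=
          mul_le_mul_of_nonneg_right h1 (Real.rpow_nonneg ht0.le _)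
      _ = a ^ α / α * t ^ (s - 1 - α) := by
          rw [Real.div_rpow ha ht0.le]
          rw [show s - 1 - α = -α + (s - 1) by ring, Real.rpow_add ht0,
            Real.rpow_neg ht0.le]
          ring
  · -- on Ioi 1, dominate by a * t^(s-2)
    have hg : IntegrableOn (fun t : ℝ => a * t ^ (s - 2)) (Ioi (1:ℝ)) :=
      (integrableOn_Ioi_rpow_of_lt (by linarith) one_pos).const_mul _
    refine Integrable.mono' hg (hmeas.aestronglyMeasurable.restrict) ?_
    filter_upwards [ae_restrict_mem measurableSet_Ioi] with t ht
    have ht0 : (0:ℝ) < t := lt_trans one_pos ht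
    rw [Real.norm_eq_abs, abs_of_nonneg (f_nonneg ha ht0)]
    have h1 : Real.log (1 + a / t) ≤ a / t := by
      have := log_one_add_le_rpow (div_nonneg ha ht0.le) one_pos le_rfl
      rwa [Real.rpow_one, div_one] at this
    calc Real.log (1 + a / t) * t ^ (s - 1) ≤ a / t * t ^ (s - 1) :=
          mul_le_mul_of_nonneg_right h1 (Real.rpow_nonneg ht0.le _)
      _ = a * t ^ (s - 2) := by
          rw [show s - 2 = -1 + (s - 1) by ring, Real.rpow_add ht0,
            Real.rpow_neg_one]
          field_simp

lemma integral_f_eq {l s : ℝ} (hl : 0 ≤ l) (hs0 : 0 < s) (hs1 : s < 1) :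
    ∫ t in Ioi (0:ℝ), Real.log (1 + l ^ 2 / t) * t ^ (s - 1)
      = l ^ (2 * s) * Cint s := by
  rcases eq_or_lt_of_le hl with hl0 | hl0
  · simp [← hl0, Real.zero_rpow (by positivity : 2 * s ≠ 0)]
  · have hb : (0:ℝ) < l ^ 2 := by positivity
    have key := integral_comp_mul_left_Ioi
      (fun t => Real.log (1 + l ^ 2 / t) * t ^ (s - 1)) 0 hb
    rw [mul_zero] at key
    have h2 : (∫ u in Ioi (0:ℝ),
        Real.log (1 + l ^ 2 / (l ^ 2 * u)) * (l ^ 2 * u) ^ (s - 1))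
        = (l ^ 2) ^ (s - 1) * Cint s := by
      rw [Cint, ← integral_const_mul]
      apply setIntegral_congr_fun measurableSet_Ioi
      intro u hu
      have hu0 : (0:ℝ) < u := hu
      have heq : l ^ 2 / (l ^ 2 * u) = 1 / u := by
        field_simp
      simp only [heq, Real.mul_rpow hb.le hu0.le]
      ring
    rw [h2] at key
    have : (∫ t in Ioi (0:ℝ), Real.log (1 + l ^ 2 / t) * t ^ (s - 1))
        = l ^ 2 * ((l ^ 2)⁻¹ • ∫ t in Ioi (0:ℝ),
            Real.log (1 + l ^ 2 / t) * t ^ (s - 1)) := by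
      rw [smul_eq_mul, ← mul_assoc, mul_inv_cancel₀ hb.ne', one_mul]
    rw [this, ← key, ← mul_assoc]
    congr 1
    rw [← Real.rpow_natCast l 2, ← Real.rpow_mul hl, ← Real.rpow_add (by positivity)]
    norm_num
    ring_nf

lemma Cint_pos {s : ℝ} (hs0 : 0 < s) (hs1 : s < 1) : 0 < Cint s := by
  have hint : IntegrableOn (fun u : ℝ => Real.log (1 + 1 / u) * u ^ (s - 1))
      (Ioi (0:ℝ)) := by
    exact integrable_f (a := 1) zero_le_one hs0 hs1
  rw [Cint, setIntegral_pos_iff_support_of_nonneg_ae ?_ hint]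
  · refine lt_of_lt_of_le (b := volume (Ioi (0:ℝ))) ?_ (measure_mono ?_)
    · rw [Real.volume_Ioi]
      exact ENNReal.zero_lt_top
    · intro u hu
      have hu0 : (0:ℝ) < u := hu
      refine ⟨?_, hu⟩
      have h1 : 0 < Real.log (1 + 1 / u) :=
        Real.log_pos (by nlinarith [one_div_pos.mpr hu0])
      have h2 : 0 < u ^ (s - 1) := Real.rpow_pos_of_pos hu0 _
      exact ne_of_gt (mul_pos h1 h2)
  · filter_upwards [ae_restrict_mem measurableSet_Ioi] with u hu
    exact f_nonneg zero_le_one hu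

theorem p_energy_monotone_quasi_order (n : ℕ) (lam mu : Fin n → ℝ)
    (hlam : ∀ j, 0 ≤ lam j) (hmu : ∀ j, 0 ≤ mu j)
    (h : ∀ z : ℝ, 0 ≤ z →
      ∏ j : Fin n, (z ^ 2 + (lam j) ^ 2) ≤ ∏ j : Fin n, (z ^ 2 + (mu j) ^ 2))
    (p : ℝ) (hp0 : 0 < p) (hp2 : p < 2) :
    ∑ j : Fin n, lam j ^ p ≤ ∑ j : Fin n, mu j ^ p := by
  set s : ℝ := p / 2 with hsdef
  have hs0 : 0 < s := by positivity
  have hs1 : s < 1 := by simp only [hsdef]; linarith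
  have h2s : 2 * s = p := by simp only [hsdef]; ring
  have key : ∀ v : Fin n → ℝ, (∀ j, 0 ≤ v j) →
      (∫ t in Ioi (0:ℝ), ∑ j : Fin n, Real.log (1 + v j ^ 2 / t) * t ^ (s - 1))
        = (∑ j : Fin n, v j ^ p) * Cint s := by
    intro v hv
    rw [integral_finset_sum _ (fun j _ => integrable_f (by positivity) hs0 hs1),
      Finset.sum_mul]
    refine Finset.sum_congr rfl fun j _ => ?_
    rw [integral_f_eq (hv j) hs0 hs1, h2s]
  have hmono : (∫ t in Ioi (0:ℝ),
        ∑ j : Fin n, Real.log (1 + lam j ^ 2 / t) * t ^ (s - 1))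
      ≤ ∫ t in Ioi (0:ℝ),
        ∑ j : Fin n, Real.log (1 + mu j ^ 2 / t) * t ^ (s - 1) := by
    refine setIntegral_mono_on
      (integrable_finset_sum _ fun j _ => integrable_f (by positivity) hs0 hs1)
      (integrable_finset_sum _ fun j _ => integrable_f (by positivity) hs0 hs1)
      measurableSet_Ioi ?_
    intro t ht
    have ht0 : (0:ℝ) < t := ht
    rw [← Finset.sum_mul, ← Finset.sum_mul]
    refine mul_le_mul_of_nonneg_right ?_ (Real.rpow_nonneg ht0.le _)
    have hposl : ∀ j ∈ Finset.univ, (0:ℝ) < 1 + lam j ^ 2 / t :=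
      fun j _ => by positivity
    have hposm : ∀ j ∈ Finset.univ, (0:ℝ) < 1 + mu j ^ 2 / t :=
      fun j _ => by positivity
    rw [← Real.log_prod (fun j hj => (hposl j hj).ne'),
        ← Real.log_prod (fun j hj => (hposm j hj).ne')]
    have hprodpos : (0:ℝ) < ∏ j : Fin n, (1 + lam j ^ 2 / t) :=
      Finset.prod_pos hposl
    have hz := h (Real.sqrt t) (Real.sqrt_nonneg t)
    rw [Real.sq_sqrt ht0.le] at hz
    have hform : ∀ a : ℝ, 1 + a / t = (t + a) / t := fun a => by field_simp
    have hprodle : (∏ j : Fin n, (1 + lam j ^ 2 / t))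
        ≤ ∏ j : Fin n, (1 + mu j ^ 2 / t) := by
      calc (∏ j : Fin n, (1 + lam j ^ 2 / t))
          = (∏ j : Fin n, (t + lam j ^ 2)) / t ^ n := by
            simp_rw [hform]
            rw [Finset.prod_div_distrib, Finset.prod_const, Finset.card_univ,
              Fintype.card_fin]
        _ ≤ (∏ j : Fin n, (t + mu j ^ 2)) / t ^ n := by gcongr
        _ = ∏ j : Fin n, (1 + mu j ^ 2 / t) := by
            simp_rw [hform]
            rw [Finset.prod_div_distrib, Finset.prod_const, Finset.card_univ,
              Fintype.card_fin]
    exact Real.log_le_log hprodpos hprodle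
  rw [key lam hlam, key mu hmu] at hmono
  exact le_of_mul_le_mul_right hmono (Cint_pos hs0 hs1)
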